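/- arXiv:1506.07481 — 3 statements merged into one kernel-verified Lean document; each statement's English description precedes it below -/
import Mathlib

section
/- Let U ⊆ ℝ⁴ be open and let F = f₀ + f₁·i + f₂·j + f₃·ij : U → Cl(1,1) have C² components satisfying the right Cl(1,1)-differentiability system on U: ∂₀f₀ = ∂₁f₁ = ∂₂f₂ = ∂₃f₃; ∂₀f₁ = −∂₁f₀ = ∂₂f₃ = −∂₃f₂; ∂₀f₂ = −∂₁f₃ = ∂₂f₀ = −∂₃f₁; ∂₀f₃ = ∂₁f₂ = ∂₂f₁ = ∂₃f₀. Then each component fₗ is ultra-hyperbolic on U, i.e., Δ₍₂,₂₎fₗ = 0 on U. -/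
open Filter Topology Quaternion

noncomputable section

abbrev SQ : Type := ℍ[ℝ, -1, 1]

def qi : SQ := ⟨0, 1, 0, 0⟩
def qj : SQ := ⟨0, 0, 1, 0⟩
def qk : SQ := ⟨0, 0, 0, 1⟩

/-- Partial derivative of a real-valued function on `Fin n → ℝ` in the `l`-th
coordinate direction. -/
def pd {n : ℕ} (l : Fin n) (f : (Fin n → ℝ) → ℝ) (x : Fin n → ℝ) : ℝ :=
  fderiv ℝ f x (Pi.single l 1)

/-- Componentwise partial derivative of a split-quaternion-valued function. -/
def pdQ {n : ℕ} (l : Fin n) (F : (Fin n → ℝ) → SQ) (x : Fin n → ℝ) : SQ :=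
  ⟨pd l (fun y => (F y).re) x, pd l (fun y => (F y).imI) x,
   pd l (fun y => (F y).imJ) x, pd l (fun y => (F y).imK) x⟩

/-- The operator `∂̄` applied on the left. -/
def dbar (F : (Fin 4 → ℝ) → SQ) (x : Fin 4 → ℝ) : SQ :=
  pdQ 0 F x + qi * pdQ 1 F x - qj * pdQ 2 F x - qk * pdQ 3 F x

/-- The operator `∂̄` applied on the right. -/
def dbarR (F : (Fin 4 → ℝ) → SQ) (x : Fin 4 → ℝ) : SQ :=
  pdQ 0 F x + pdQ 1 F x * qi - pdQ 2 F x * qj - pdQ 3 F x * qk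

/-- The operator `∂` applied on the left. -/
def del (F : (Fin 4 → ℝ) → SQ) (x : Fin 4 → ℝ) : SQ :=
  pdQ 0 F x - qi * pdQ 1 F x + qj * pdQ 2 F x + qk * pdQ 3 F x

/-- The operator `∂` applied on the right. -/
def delR (F : (Fin 4 → ℝ) → SQ) (x : Fin 4 → ℝ) : SQ :=
  pdQ 0 F x - pdQ 1 F x * qi + pdQ 2 F x * qj + pdQ 3 F x * qk

/-- The identification of `ℝ⁴` with the split-quaternions. -/
def toQ (x : Fin 4 → ℝ) : SQ := ⟨x 0, x 1, x 2, x 3⟩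

/-- The identification of the split-quaternions with `ℝ⁴`. -/
def toT (Z : SQ) : Fin 4 → ℝ := ![Z.re, Z.imI, Z.imJ, Z.imK]

/-- The ultrahyperbolic operator `Δ₍₂,₂₎` on `ℝ^{2,2}`. -/
def box (f : (Fin 4 → ℝ) → ℝ) (x : Fin 4 → ℝ) : ℝ :=
  pd 0 (pd 0 f) x + pd 1 (pd 1 f) x - pd 2 (pd 2 f) x - pd 3 (pd 3 f) x



lemma pd_congr {n : ℕ} (l : Fin n) {g h : (Fin n → ℝ) → ℝ} {x : Fin n → ℝ}
    (he : g =ᶠ[𝓝 x] h) : pd l g x = pd l h x := by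
  unfold pd; rw [he.fderiv_eq]

lemma pd_neg {n : ℕ} (l : Fin n) (g : (Fin n → ℝ) → ℝ) (x : Fin n → ℝ) :
    pd l (fun y => -(g y)) x = -pd l g x := by
  unfold pd; rw [fderiv_fun_neg]; simp

lemma pd_comm {f : (Fin 4 → ℝ) → ℝ} {U : Set (Fin 4 → ℝ)} (hU : IsOpen U)
    {x : Fin 4 → ℝ} (hx : x ∈ U) (hf : ContDiffOn ℝ 2 f U) (i j : Fin 4) :
    pd i (pd j f) x = pd j (pd i f) x := by
  have hd : DifferentiableAt ℝ (fderiv ℝ f) x := by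
    have h1 : ContDiffOn ℝ 1 (fderiv ℝ f) U :=
      hf.fderiv_of_isOpen hU (by norm_num)
    exact (h1.contDiffAt (hU.mem_nhds hx)).differentiableAt one_ne_zero
  have key : ∀ a b : Fin 4,
      pd a (pd b f) x = fderiv ℝ (fderiv ℝ f) x (Pi.single a 1) (Pi.single b 1) := by
    intro a b
    rw [show pd a (pd b f) x =
        fderiv ℝ (fun y => (fderiv ℝ f y) (Pi.single b 1)) x (Pi.single a 1) from rfl]
    rw [fderiv_clm_apply hd (differentiableAt_const _)]
    simp
  have hsymm : IsSymmSndFDerivAt ℝ f x :=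
    (hf.contDiffAt (hU.mem_nhds hx)).isSymmSndFDerivAt (by simp)
  rw [key, key, hsymm]

/-- components of a function with C² components satisfying the right
Cl(1,1)-differentiability system on an open set `U` are ultra-hyperbolic on `U`. -/
theorem rightDiffSystem_ultrahyperbolic (U : Set (Fin 4 → ℝ)) (hU : IsOpen U)
    (f₀ f₁ f₂ f₃ : (Fin 4 → ℝ) → ℝ)
    (h₀ : ContDiffOn ℝ 2 f₀ U) (h₁ : ContDiffOn ℝ 2 f₁ U)
    (h₂ : ContDiffOn ℝ 2 f₂ U) (h₃ : ContDiffOn ℝ 2 f₃ U)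
    (hsys : ∀ x ∈ U,
      (pd 0 f₀ x = pd 1 f₁ x ∧ pd 1 f₁ x = pd 2 f₂ x ∧ pd 2 f₂ x = pd 3 f₃ x) ∧
      (pd 0 f₁ x = -pd 1 f₀ x ∧ -pd 1 f₀ x = pd 2 f₃ x ∧ pd 2 f₃ x = -pd 3 f₂ x) ∧
      (pd 0 f₂ x = -pd 1 f₃ x ∧ -pd 1 f₃ x = pd 2 f₀ x ∧ pd 2 f₀ x = -pd 3 f₁ x) ∧
      (pd 0 f₃ x = pd 1 f₂ x ∧ pd 1 f₂ x = pd 2 f₁ x ∧ pd 2 f₁ x = pd 3 f₀ x)) :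
    ∀ x ∈ U, box f₀ x = 0 ∧ box f₁ x = 0 ∧ box f₂ x = 0 ∧ box f₃ x = 0 := by
  intro x hx
  have mem : U ∈ 𝓝 x := hU.mem_nhds hx
  -- congruence helper: equality on U gives equality of partials at x
  have key : ∀ (g h : (Fin 4 → ℝ) → ℝ) (i : Fin 4), (∀ y ∈ U, g y = h y) →
      pd i g x = pd i h x := fun g h i hgh =>
    pd_congr i (Filter.eventuallyEq_of_mem mem hgh)
  -- all the first-order identities, as functions on U
  -- box f₀
  have E01 : pd 0 (pd 0 f₀) x = pd 0 (pd 1 f₁) x :=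
    key _ _ 0 fun y hy => (hsys y hy).1.1
  have E02 : pd 1 (pd 1 f₀) x = -pd 1 (pd 0 f₁) x := by
    rw [key (pd 1 f₀) (fun y => -(pd 0 f₁ y)) 1 (fun y hy => by
      beta_reduce
      have := (hsys y hy).2.1.1; linarith)]
    exact pd_neg _ _ _
  have E03 : pd 2 (pd 2 f₀) x = -pd 2 (pd 3 f₁) x := by
    rw [key (pd 2 f₀) (fun y => -(pd 3 f₁ y)) 2 (fun y hy => (hsys y hy).2.2.1.2.2)]
    exact pd_neg _ _ _
  have E04 : pd 3 (pd 3 f₀) x = pd 3 (pd 2 f₁) x :=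
    key _ _ 3 fun y hy => ((hsys y hy).2.2.2.2.2).symm
  -- box f₁
  have E11 : pd 0 (pd 0 f₁) x = -pd 0 (pd 1 f₀) x := by
    rw [key (pd 0 f₁) (fun y => -(pd 1 f₀ y)) 0 (fun y hy => (hsys y hy).2.1.1)]
    exact pd_neg _ _ _
  have E12 : pd 1 (pd 1 f₁) x = pd 1 (pd 0 f₀) x :=
    key _ _ 1 fun y hy => ((hsys y hy).1.1).symm
  have E13 : pd 2 (pd 2 f₁) x = pd 2 (pd 3 f₀) x :=
    key _ _ 2 fun y hy => (hsys y hy).2.2.2.2.2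
  have E14 : pd 3 (pd 3 f₁) x = -pd 3 (pd 2 f₀) x := by
    rw [key (pd 3 f₁) (fun y => -(pd 2 f₀ y)) 3 (fun y hy => by
      beta_reduce
      have := (hsys y hy).2.2.1.2.2; linarith)]
    exact pd_neg _ _ _
  -- box f₂
  have E21 : pd 0 (pd 0 f₂) x = -pd 0 (pd 1 f₃) x := by
    rw [key (pd 0 f₂) (fun y => -(pd 1 f₃ y)) 0 (fun y hy => (hsys y hy).2.2.1.1)]
    exact pd_neg _ _ _
  have E22 : pd 1 (pd 1 f₂) x = pd 1 (pd 0 f₃) x :=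
    key _ _ 1 fun y hy => ((hsys y hy).2.2.2.1).symm
  have E23 : pd 2 (pd 2 f₂) x = pd 2 (pd 3 f₃) x :=
    key _ _ 2 fun y hy => (hsys y hy).1.2.2
  have E24 : pd 3 (pd 3 f₂) x = -pd 3 (pd 2 f₃) x := by
    rw [key (pd 3 f₂) (fun y => -(pd 2 f₃ y)) 3 (fun y hy => by
      beta_reduce
      have := (hsys y hy).2.1.2.2; linarith)]
    exact pd_neg _ _ _
  -- box f₃
  have E31 : pd 0 (pd 0 f₃) x = pd 0 (pd 1 f₂) x :=
    key _ _ 0 fun y hy => (hsys y hy).2.2.2.1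
  have E32 : pd 1 (pd 1 f₃) x = -pd 1 (pd 0 f₂) x := by
    rw [key (pd 1 f₃) (fun y => -(pd 0 f₂ y)) 1 (fun y hy => by
      beta_reduce
      have := (hsys y hy).2.2.1.1; linarith)]
    exact pd_neg _ _ _
  have E33 : pd 2 (pd 2 f₃) x = -pd 2 (pd 3 f₂) x := by
    rw [key (pd 2 f₃) (fun y => -(pd 3 f₂ y)) 2 (fun y hy => (hsys y hy).2.1.2.2)]
    exact pd_neg _ _ _
  have E34 : pd 3 (pd 3 f₃) x = pd 3 (pd 2 f₂) x :=
    key _ _ 3 fun y hy => ((hsys y hy).1.2.2).symm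
  -- Schwarz symmetry
  have C0 := fun i j => pd_comm hU hx h₀ i j
  have C1 := fun i j => pd_comm hU hx h₁ i j
  have C2 := fun i j => pd_comm hU hx h₂ i j
  have C3 := fun i j => pd_comm hU hx h₃ i j
  refine ⟨?_, ?_, ?_, ?_⟩
  · unfold box
    rw [E01, E02, E03, E04, C1 1 0, C1 3 2]
    ring
  · unfold box
    rw [E11, E12, E13, E14, C0 1 0, C0 3 2]
    ring
  · unfold box
    rw [E21, E22, E23, E24, C3 1 0, C3 3 2]
    ring
  · unfold box
    rw [E31, E32, E33, E34, C2 1 0, C2 3 2]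
    ring



end
end

section
/- Let g₁, g₂, g₃, g₄ : ℝ² → ℝ be C¹ and define F : ℝ⁴ → Cl(1,1) by F(x₀,x₁,x₂,x₃) = (g₁(x₀+x₂, x₁+x₃) + g₂(x₀−x₂, x₁−x₃)) + (g₃(x₀−x₂, x₁−x₃) + g₄(x₀+x₂, x₁+x₃))·i + (g₁(x₀+x₂, x₁+x₃) − g₂(x₀−x₂, x₁−x₃))·j + (g₃(x₀−x₂, x₁−x₃) − g₄(x₀+x₂, x₁+x₃))·ij. Then F is left regular, i.e., ∂̄F = 0 at every point of ℝ⁴. -/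
open Filter Topology Quaternion

noncomputable section

/-! ### Auxiliary lemmas -/

def Mp : (Fin 4 → ℝ) →L[ℝ] ℝ × ℝ :=
  (((ContinuousLinearMap.proj 0 : (Fin 4 → ℝ) →L[ℝ] ℝ) + ContinuousLinearMap.proj 2)).prod
    ((ContinuousLinearMap.proj 1 : (Fin 4 → ℝ) →L[ℝ] ℝ) + ContinuousLinearMap.proj 3)

def Mm : (Fin 4 → ℝ) →L[ℝ] ℝ × ℝ :=
  (((ContinuousLinearMap.proj 0 : (Fin 4 → ℝ) →L[ℝ] ℝ) - ContinuousLinearMap.proj 2)).prod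
    ((ContinuousLinearMap.proj 1 : (Fin 4 → ℝ) →L[ℝ] ℝ) - ContinuousLinearMap.proj 3)

lemma hasFDeriv_plus (g : ℝ × ℝ → ℝ) (hg : ContDiff ℝ 1 g) (x : Fin 4 → ℝ) :
    HasFDerivAt (fun y : Fin 4 → ℝ => g (y 0 + y 2, y 1 + y 3))
      ((fderiv ℝ g (x 0 + x 2, x 1 + x 3)).comp Mp) x := by
  have h1 : HasFDerivAt (fun y : Fin 4 → ℝ => ((y 0 + y 2, y 1 + y 3) : ℝ × ℝ)) Mp x :=
    Mp.hasFDerivAt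
  exact ((hg.differentiable one_ne_zero).differentiableAt.hasFDerivAt).comp x h1

lemma hasFDeriv_minus (g : ℝ × ℝ → ℝ) (hg : ContDiff ℝ 1 g) (x : Fin 4 → ℝ) :
    HasFDerivAt (fun y : Fin 4 → ℝ => g (y 0 - y 2, y 1 - y 3))
      ((fderiv ℝ g (x 0 - x 2, x 1 - x 3)).comp Mm) x := by
  have h1 : HasFDerivAt (fun y : Fin 4 → ℝ => ((y 0 - y 2, y 1 - y 3) : ℝ × ℝ)) Mm x :=
    Mm.hasFDerivAt
  exact ((hg.differentiable one_ne_zero).differentiableAt.hasFDerivAt).comp x h1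

lemma pd_plus (g : ℝ × ℝ → ℝ) (hg : ContDiff ℝ 1 g) (x : Fin 4 → ℝ) (l : Fin 4) :
    pd l (fun y => g (y 0 + y 2, y 1 + y 3)) x
      = fderiv ℝ g (x 0 + x 2, x 1 + x 3)
          ((Pi.single l 1 : Fin 4 → ℝ) 0 + (Pi.single l 1 : Fin 4 → ℝ) 2,
           (Pi.single l 1 : Fin 4 → ℝ) 1 + (Pi.single l 1 : Fin 4 → ℝ) 3) := by
  rw [pd, (hasFDeriv_plus g hg x).fderiv]; rfl

lemma pd_minus (g : ℝ × ℝ → ℝ) (hg : ContDiff ℝ 1 g) (x : Fin 4 → ℝ) (l : Fin 4) :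
    pd l (fun y => g (y 0 - y 2, y 1 - y 3)) x
      = fderiv ℝ g (x 0 - x 2, x 1 - x 3)
          ((Pi.single l 1 : Fin 4 → ℝ) 0 - (Pi.single l 1 : Fin 4 → ℝ) 2,
           (Pi.single l 1 : Fin 4 → ℝ) 1 - (Pi.single l 1 : Fin 4 → ℝ) 3) := by
  rw [pd, (hasFDeriv_minus g hg x).fderiv]; rfl

lemma pd_add' {f h : (Fin 4 → ℝ) → ℝ} {x : Fin 4 → ℝ} (l : Fin 4)
    (hf : DifferentiableAt ℝ f x) (hh : DifferentiableAt ℝ h x) :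
    pd l (fun y => f y + h y) x = pd l f x + pd l h x := by
  simp [pd, fderiv_fun_add hf hh]

lemma pd_sub' {f h : (Fin 4 → ℝ) → ℝ} {x : Fin 4 → ℝ} (l : Fin 4)
    (hf : DifferentiableAt ℝ f x) (hh : DifferentiableAt ℝ h x) :
    pd l (fun y => f y - h y) x = pd l f x - pd l h x := by
  simp [pd, fderiv_fun_sub hf hh]

lemma clm_neg_fst (L : ℝ × ℝ →L[ℝ] ℝ) : L (-1, 0) = -L (1, 0) := by
  rw [show ((-1 : ℝ), (0 : ℝ)) = -((1 : ℝ), (0 : ℝ)) by simp [Prod.ext_iff], map_neg]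

lemma clm_neg_snd (L : ℝ × ℝ →L[ℝ] ℝ) : L (0, -1) = -L (0, 1) := by
  rw [show ((0 : ℝ), (-1 : ℝ)) = -((0 : ℝ), (1 : ℝ)) by simp [Prod.ext_iff], map_neg]

/-- every function of the special form built from C¹ functions
`g₁, g₂, g₃, g₄ : ℝ² → ℝ` of the null coordinates is left regular on `ℝ⁴`. -/
theorem special_form_leftRegular (g₁ g₂ g₃ g₄ : ℝ × ℝ → ℝ)
    (hg₁ : ContDiff ℝ 1 g₁) (hg₂ : ContDiff ℝ 1 g₂)
    (hg₃ : ContDiff ℝ 1 g₃) (hg₄ : ContDiff ℝ 1 g₄) :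
    ∀ x : Fin 4 → ℝ,
      dbar (fun y =>
        (⟨g₁ (y 0 + y 2, y 1 + y 3) + g₂ (y 0 - y 2, y 1 - y 3),
          g₃ (y 0 - y 2, y 1 - y 3) + g₄ (y 0 + y 2, y 1 + y 3),
          g₁ (y 0 + y 2, y 1 + y 3) - g₂ (y 0 - y 2, y 1 - y 3),
          g₃ (y 0 - y 2, y 1 - y 3) - g₄ (y 0 + y 2, y 1 + y 3)⟩ : SQ)) x = 0 := by
  intro x
  have d₁ : DifferentiableAt ℝ (fun y : Fin 4 → ℝ => g₁ (y 0 + y 2, y 1 + y 3)) x :=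
    (hasFDeriv_plus g₁ hg₁ x).differentiableAt
  have d₂ : DifferentiableAt ℝ (fun y : Fin 4 → ℝ => g₂ (y 0 - y 2, y 1 - y 3)) x :=
    (hasFDeriv_minus g₂ hg₂ x).differentiableAt
  have d₃ : DifferentiableAt ℝ (fun y : Fin 4 → ℝ => g₃ (y 0 - y 2, y 1 - y 3)) x :=
    (hasFDeriv_minus g₃ hg₃ x).differentiableAt
  have d₄ : DifferentiableAt ℝ (fun y : Fin 4 → ℝ => g₄ (y 0 + y 2, y 1 + y 3)) x :=
    (hasFDeriv_plus g₄ hg₄ x).differentiableAt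
  have hconv : ∀ l : Fin 4,
      pdQ l (fun y =>
        (⟨g₁ (y 0 + y 2, y 1 + y 3) + g₂ (y 0 - y 2, y 1 - y 3),
          g₃ (y 0 - y 2, y 1 - y 3) + g₄ (y 0 + y 2, y 1 + y 3),
          g₁ (y 0 + y 2, y 1 + y 3) - g₂ (y 0 - y 2, y 1 - y 3),
          g₃ (y 0 - y 2, y 1 - y 3) - g₄ (y 0 + y 2, y 1 + y 3)⟩ : SQ)) x
      = ⟨pd l (fun y => g₁ (y 0 + y 2, y 1 + y 3) + g₂ (y 0 - y 2, y 1 - y 3)) x,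
         pd l (fun y => g₃ (y 0 - y 2, y 1 - y 3) + g₄ (y 0 + y 2, y 1 + y 3)) x,
         pd l (fun y => g₁ (y 0 + y 2, y 1 + y 3) - g₂ (y 0 - y 2, y 1 - y 3)) x,
         pd l (fun y => g₃ (y 0 - y 2, y 1 - y 3) - g₄ (y 0 + y 2, y 1 + y 3)) x⟩ :=
    fun l => rfl
  simp only [dbar, hconv, pd_add' _ d₁ d₂, pd_add' _ d₃ d₄, pd_sub' _ d₁ d₂, pd_sub' _ d₃ d₄,
    pd_plus g₁ hg₁ x, pd_minus g₂ hg₂ x, pd_minus g₃ hg₃ x, pd_plus g₄ hg₄ x]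
  simp only [Pi.single_apply, Fin.reduceEq, if_true, if_false, reduceIte]
  norm_num
  simp only [clm_neg_fst, clm_neg_snd]
  apply QuaternionAlgebra.ext <;>
    simp [qi, qj, qk, QuaternionAlgebra.re_mul, QuaternionAlgebra.imI_mul,
      QuaternionAlgebra.imJ_mul, QuaternionAlgebra.imK_mul] <;> ring

end
end

section
/- There do not exist functions g₁, g₂, g₃, g₄ : ℝ² → ℝ such that for all (x₀,x₁,x₂,x₃) ∈ ℝ⁴ the function f(x₀,x₁,x₂,x₃) = x₁x₂x₃ − (x₀x₂x₃)·i + (x₀x₁x₃)·j + (x₀x₁x₂)·ij equals (g₁(x₀+x₂, x₁+x₃) + g₂(x₀−x₂, x₁−x₃)) + (g₃(x₀−x₂, x₁−x₃) + g₄(x₀+x₂, x₁+x₃))·i + (g₁(x₀+x₂, x₁+x₃) − g₂(x₀−x₂, x₁−x₃))·j + (g₃(x₀−x₂, x₁−x₃) − g₄(x₀+x₂, x₁+x₃))·ij. Hence not every left regular function on ℝ⁴ has this form. -/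
open Filter Topology Quaternion

noncomputable section

/-- the left regular function
`f = x₁x₂x₃ - (x₀x₂x₃)i + (x₀x₁x₃)j + (x₀x₁x₂)ij` is not of the special form of
Theorem `oneclass`. -/
theorem counterexample_not_special_form :
    ¬ ∃ g₁ g₂ g₃ g₄ : ℝ × ℝ → ℝ, ∀ x : Fin 4 → ℝ,
      (⟨x 1 * x 2 * x 3, -(x 0 * x 2 * x 3), x 0 * x 1 * x 3, x 0 * x 1 * x 2⟩ : SQ) =
        (⟨g₁ (x 0 + x 2, x 1 + x 3) + g₂ (x 0 - x 2, x 1 - x 3),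
          g₃ (x 0 - x 2, x 1 - x 3) + g₄ (x 0 + x 2, x 1 + x 3),
          g₁ (x 0 + x 2, x 1 + x 3) - g₂ (x 0 - x 2, x 1 - x 3),
          g₃ (x 0 - x 2, x 1 - x 3) - g₄ (x 0 + x 2, x 1 + x 3)⟩ : SQ) := by
  rintro ⟨g₁, g₂, g₃, g₄, h⟩
  have h1 := congrArg (fun z : SQ => z.re + z.imJ) (h ![1, 0, 0, 0])
  have h2 := congrArg (fun z : SQ => z.re + z.imJ) (h ![1, 1, 0, -1])
  simp only [Matrix.cons_val_zero, Matrix.cons_val_one, Matrix.head_cons,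
    Matrix.cons_val_two, Matrix.tail_cons, Matrix.cons_val_three] at h1 h2
  norm_num at h1 h2
  linarith

end
end
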